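/- A continuous flow φ on a compact metric space is KH-kinematic expansive if and only if φ is kinematic expansive and fix(φ) is open. -/

import Mathlib

open Filter Topology

section Aux

variable {X : Type*} [MetricSpace X] [CompactSpace X]
variable (φ : ℝ → X → X)

private lemma flow_cont (hcont : Continuous fun p : ℝ × X => φ p.1 p.2) (t : ℝ) :
    Continuous (φ t) :=
  hcont.comp (continuous_const.prodMk continuous_id)

private lemma nonfix_orbit (h0 : ∀ x, φ 0 x = x)
    (hadd : ∀ t s x, φ (t + s) x = φ t (φ s x))
    {x : X} (hx : ¬ ∀ t, φ t x = x) (a : ℝ) : ¬ ∀ t, φ t (φ a x) = φ a x := by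
  intro h
  apply hx
  have h1 := hadd (-a) a x
  rw [neg_add_cancel, h0] at h1
  have hxa : x = φ a x := h1.trans (h (-a))
  intro t
  calc φ t x = φ t (φ a x) := by rw [← hxa]
    _ = φ a x := h t
    _ = x := hxa.symm

/-- small time moves points uniformly little -/
private lemma small_time (hcont : Continuous fun p : ℝ × X => φ p.1 p.2)
    (h0 : ∀ x, φ 0 x = x) :
    ∀ η > (0:ℝ), ∃ ρ > (0:ℝ), ∀ (z : X) (a : ℝ), |a| < ρ → dist (φ a z) z < η := by
  by_contra h
  push_neg at h
  obtain ⟨η, hη, h⟩ := h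
  have hseq : ∀ n : ℕ, ∃ (z : X) (a : ℝ), |a| < 1/(n+1) ∧ η ≤ dist (φ a z) z := by
    intro n
    obtain ⟨z, a, h1, h2⟩ := h (1/(n+1)) (by positivity)
    exact ⟨z, a, h1, h2⟩
  choose z a ha hd using hseq
  obtain ⟨w, -, κ, hκ, hconv⟩ := isCompact_univ.tendsto_subseq (fun n => Set.mem_univ (z n))
  have haκ : Tendsto (fun j => a (κ j)) atTop (𝓝 0) := by
    apply squeeze_zero_norm (fun j => le_of_lt (ha (κ j)))
    exact tendsto_one_div_add_atTop_nhds_zero_nat.comp hκ.tendsto_atTop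
  have hφ : Tendsto (fun j => φ (a (κ j)) (z (κ j))) atTop (𝓝 (φ 0 w)) := by
    have : Tendsto (fun j => ((a (κ j)), z (κ j))) atTop (𝓝 (0, w)) :=
      haκ.prodMk_nhds hconv
    exact (hcont.tendsto (0, w)).comp this
  rw [h0] at hφ
  have hdist : Tendsto (fun j => dist (φ (a (κ j)) (z (κ j))) (z (κ j))) atTop (𝓝 0) := by
    have := hφ.dist hconv
    simpa using this
  have := (hdist.eventually (eventually_lt_nhds hη)).exists
  obtain ⟨j, hj⟩ := this
  exact absurd (hd (κ j)) (not_le.mpr hj)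

/-- IVT helper: if s is continuous, s 0 = 0, bounded above by u, then
    for every c ≥ 0 there is t with s t = t - c. -/
private lemma helperH {s : ℝ → ℝ} (hs : Continuous s) (hs0 : s 0 = 0) {u : ℝ}
    (hlt : ∀ t, s t < u) (c : ℝ) (hc : 0 ≤ c) : ∃ t, s t = t - c := by
  set g : ℝ → ℝ := fun t => s t - (t - c) with hg_def
  have hg : Continuous g := hs.sub (continuous_id.sub continuous_const)
  have hg0 : g 0 = c := by simp [hg_def, hs0]
  have hgT : g (u + c) < 0 := by
    have := hlt (u + c)
    simp only [hg_def]
    linarith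
  have hmem : (0:ℝ) ∈ Set.uIcc (g 0) (g (u + c)) := by
    rw [Set.mem_uIcc]
    right
    constructor
    · linarith
    · rw [hg0]; exact hc
  obtain ⟨t, -, ht⟩ := intermediate_value_uIcc hg.continuousOn hmem
  refine ⟨t, ?_⟩
  have : s t - (t - c) = 0 := ht
  linarith

/-- if s misses a value, every c ≥ 0 is a δ-almost-period of some non-fixed point -/
private lemma sublemma_T (h0 : ∀ x, φ 0 x = x)
    (hadd : ∀ t s x, φ (t + s) x = φ t (φ s x))
    {x : X} (hx : ¬ ∀ t, φ t x = x) {s : ℝ → ℝ} (hs : Continuous s) (hs0 : s 0 = 0)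
    {δ : ℝ} (htrack : ∀ t, dist (φ t x) (φ (s t) x) < δ)
    {u : ℝ} (hu : ∀ t, s t ≠ u) (c : ℝ) (hc : 0 ≤ c) :
    ∃ w : X, (¬ ∀ t, φ t w = w) ∧ dist (φ c w) w < δ := by
  have hu0 : u ≠ 0 := fun h => hu 0 (by rw [hs0, h])
  rcases lt_or_gt_of_ne hu0 with hneg | hpos
  · -- u < 0 : s t > u for all t
    have hlt : ∀ t, u < s t := by
      intro t
      by_contra hge
      push_neg at hge
      have hmem : u ∈ Set.uIcc (s t) (s 0) := by
        rw [hs0, Set.mem_uIcc]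
        left
        exact ⟨hge, le_of_lt hneg⟩
      obtain ⟨t', -, ht'⟩ := intermediate_value_uIcc hs.continuousOn hmem
      exact hu t' ht'
    -- apply helperH to s' t = - s (-t), bounded above by -u
    have hs' : Continuous (fun t => - s (-t)) := (hs.comp continuous_neg).neg
    have hs'0 : - s (-(0:ℝ)) = 0 := by simp [hs0]
    have hlt' : ∀ t, - s (-t) < -u := fun t => by linarith [hlt (-t)]
    obtain ⟨t, ht⟩ := helperH hs' hs'0 hlt' c hc
    -- - s (-t) = t - c, so s (-t) = (-t) + c
    refine ⟨φ (-t) x, nonfix_orbit φ h0 hadd hx (-t), ?_⟩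
    have hst : s (-t) = (-t) + c := by linarith
    have := htrack (-t)
    rw [hst] at this
    have heq : φ (-t + c) x = φ c (φ (-t) x) := by rw [add_comm, hadd]
    rw [heq] at this
    calc dist (φ c (φ (-t) x)) (φ (-t) x)
        = dist (φ (-t) x) (φ c (φ (-t) x)) := dist_comm _ _
      _ < δ := this
  · -- u > 0 : s t < u for all t
    have hlt : ∀ t, s t < u := by
      intro t
      by_contra hge
      push_neg at hge
      have hmem : u ∈ Set.uIcc (s 0) (s t) := by
        rw [hs0, Set.mem_uIcc]
        left
        exact ⟨le_of_lt hpos, hge⟩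
      obtain ⟨t', -, ht'⟩ := intermediate_value_uIcc hs.continuousOn hmem
      exact hu t' ht'
    obtain ⟨t, ht⟩ := helperH hs hs0 hlt c hc
    -- s t = t - c ; w = φ (t - c) x
    refine ⟨φ (t - c) x, nonfix_orbit φ h0 hadd hx (t - c), ?_⟩
    have h1 : φ c (φ (t - c) x) = φ t x := by
      rw [← hadd]
      norm_num
    have h2 : φ (t - c) x = φ (s t) x := by rw [ht]
    rw [h1, h2]
    exact htrack t

/-- Key lemma: with fix open, small tracking of a non-fixed orbit forces surjectivity. -/
private lemma lemma_P (hcont : Continuous fun p : ℝ × X => φ p.1 p.2)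
    (h0 : ∀ x, φ 0 x = x)
    (hadd : ∀ t s x, φ (t + s) x = φ t (φ s x))
    (hFopen : IsOpen {x : X | ∀ t, φ t x = x}) :
    ∃ δ₀ > (0:ℝ), ∀ x : X, (¬ ∀ t, φ t x = x) → ∀ s : ℝ → ℝ, Continuous s → s 0 = 0 →
      (∀ t, dist (φ t x) (φ (s t) x) < δ₀) → ∀ u, ∃ t, s t = u := by
  by_contra hP
  push_neg at hP
  -- key : every c ≥ 0 is a δ-almost-period of some non-fixed point, for every δ > 0
  have key : ∀ δ > (0:ℝ), ∀ c ≥ (0:ℝ), ∃ w : X, (¬ ∀ t, φ t w = w) ∧ dist (φ c w) w < δ := by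
    intro δ hδ c hc
    obtain ⟨x, hx, s, hs, hs0, htrack, u, hu⟩ := hP δ hδ
    obtain ⟨t0, ht0⟩ := hx
    exact sublemma_T φ h0 hadd (fun hall => ht0 (hall t0)) hs hs0 htrack hu c hc
  set Y : Set X := {x : X | ¬ ∀ t, φ t x = x} with hY_def
  have hYclosed : IsClosed Y := by
    have : Y = {x : X | ∀ t, φ t x = x}ᶜ := rfl
    rw [this]
    exact hFopen.isClosed_compl
  have hYcpt : IsCompact Y := hYclosed.isCompact
  have hYne : Y.Nonempty := by
    obtain ⟨x, hx, -⟩ := hP 1 one_pos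
    obtain ⟨t0, ht0⟩ := hx
    exact ⟨x, fun hall => ht0 (hall t0)⟩
  -- exact periodic points of every positive period
  have hper : ∀ c > (0:ℝ), ∃ w ∈ Y, φ c w = w := by
    intro c hc
    have hfc : ContinuousOn (fun w => dist (φ c w) w) Y :=
      ((flow_cont φ hcont c).dist continuous_id).continuousOn
    obtain ⟨w, hwY, hmin⟩ := hYcpt.exists_isMinOn hYne hfc
    refine ⟨w, hwY, ?_⟩
    rw [← dist_eq_zero]
    by_contra hne
    have hpos : 0 < dist (φ c w) w := lt_of_le_of_ne dist_nonneg (Ne.symm hne)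
    obtain ⟨n, hn⟩ := exists_nat_one_div_lt hpos
    obtain ⟨w', hw', hd⟩ := key (1/(n+1)) (by positivity) c hc.le
    have hle : dist (φ c w) w ≤ dist (φ c w') w' := hmin hw'
    linarith
  have hpk : ∀ k : ℕ, ∃ w ∈ Y, φ (1/((k:ℝ)+1)) w = w := fun k => hper _ (by positivity)
  choose p hpY hpper using hpk
  obtain ⟨q, hqY, κ, hκ, hconv⟩ := hYcpt.tendsto_subseq hpY
  -- multiples of the period
  have hmul : ∀ (k : ℕ) (m : ℤ), φ ((m : ℝ) * (1/((k:ℝ)+1))) (p k) = p k := by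
    intro k m
    set c : ℝ := 1/((k:ℝ)+1) with hc_def
    have hneg : φ (-c) (p k) = p k := by
      conv_lhs => rw [← hpper k]
      rw [← hadd, neg_add_cancel, h0]
    induction m using Int.induction_on with
    | zero => simpa using h0 (p k)
    | succ i ih =>
      have h1 : ((i:ℝ) + 1) * c = c + (i:ℝ) * c := by ring
      push_cast
      push_cast at ih
      rw [h1, hadd, ih, hpper k]
    | pred i ih =>
      have h1 : (-(i:ℝ) - 1) * c = -c + (-(i:ℝ)) * c := by ring
      push_cast
      push_cast at ih
      rw [h1, hadd, ih, hneg]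
  -- q is fixed
  have hqfix : ∀ t, φ t q = q := by
    intro t
    -- for each k : φ t (p k) = φ r (p k) with 0 ≤ r < 1/(k+1)
    have hrep : ∀ k : ℕ, ∃ r : ℝ, 0 ≤ r ∧ r < 1/((k:ℝ)+1) ∧ φ t (p k) = φ r (p k) := by
      intro k
      set c : ℝ := 1/((k:ℝ)+1) with hc_def
      have hcpos : (0:ℝ) < c := by positivity
      refine ⟨t - ⌊t / c⌋ * c, Int.sub_floor_div_mul_nonneg t hcpos,
        Int.sub_floor_div_mul_lt t hcpos, ?_⟩
      have h1 : t = (t - ⌊t / c⌋ * c) + (⌊t / c⌋ : ℝ) * c := by ring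
      conv_lhs => rw [h1]
      rw [hadd, hmul k ⌊t / c⌋]
    have hbound : ∀ η > (0:ℝ), dist (φ t q) q ≤ η := by
      intro η hη
      obtain ⟨ρ, hρ, hsmall⟩ := small_time φ hcont h0 (η/3) (by linarith)
      obtain ⟨N, hN⟩ := exists_nat_one_div_lt hρ
      have hev1 : ∀ᶠ j in atTop, dist (φ t (p (κ j))) (φ t q) < η/3 := by
        have : Tendsto (fun j => φ t (p (κ j))) atTop (𝓝 (φ t q)) :=
          ((flow_cont φ hcont t).tendsto q).comp hconv
        have := (tendsto_iff_dist_tendsto_zero.mp this).eventually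
          (eventually_lt_nhds (show (0:ℝ) < η/3 by linarith))
        simpa using this
      have hev2 : ∀ᶠ j in atTop, dist (p (κ j)) q < η/3 := by
        have := (tendsto_iff_dist_tendsto_zero.mp hconv).eventually
          (eventually_lt_nhds (show (0:ℝ) < η/3 by linarith))
        simpa using this
      have hev3 : ∀ᶠ j in atTop, 1/((κ j : ℝ)+1) < ρ := by
        filter_upwards [eventually_ge_atTop N] with j hj
        have hκj : N ≤ κ j := le_trans hj (hκ.le_apply)
        have : (1:ℝ)/((κ j : ℝ)+1) ≤ 1/((N:ℝ)+1) := by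
          apply one_div_le_one_div_of_le
          · positivity
          · have : (N:ℝ) ≤ (κ j : ℝ) := by exact_mod_cast hκj
            linarith
        linarith
      obtain ⟨j, h1, h2, h3⟩ := (hev1.and (hev2.and hev3)).exists
      obtain ⟨r, hr0, hrlt, hreq⟩ := hrep (κ j)
      have hsm : dist (φ r (p (κ j))) (p (κ j)) < η/3 := by
        apply hsmall
        rw [abs_of_nonneg hr0]
        linarith
      have hlt : dist (φ t q) q < η := by
        calc dist (φ t q) q
            ≤ dist (φ t q) (φ t (p (κ j))) + dist (φ t (p (κ j))) (p (κ j))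
                + dist (p (κ j)) q := dist_triangle4 _ _ _ _
          _ < η/3 + η/3 + η/3 := by
              have hmid : dist (φ t (p (κ j))) (p (κ j)) < η/3 := by
                rw [hreq]; exact hsm
              have h1' : dist (φ t q) (φ t (p (κ j))) < η/3 := by
                rw [dist_comm]; exact h1
              exact add_lt_add (add_lt_add h1' hmid) h2
          _ = η := by ring
      exact le_of_lt hlt
    have : dist (φ t q) q ≤ 0 := by
      by_contra hgt
      push_neg at hgt
      have := hbound (dist (φ t q) q / 2) (by linarith)
      linarith
    have := le_antisymm this dist_nonneg
    exact dist_eq_zero.mp this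
  exact hqY hqfix

/-- fixed points are uniformly isolated -/
private lemma fix_isolated (hcont : Continuous fun p : ℝ × X => φ p.1 p.2)
    (hKE : ∀ ε > (0:ℝ), ∃ δ > (0:ℝ), ∀ x y : X,
        (∀ t, dist (φ t x) (φ t y) < δ) → ∃ τ : ℝ, |τ| < ε ∧ y = φ τ x)
    (hFopen : IsOpen {x : X | ∀ t, φ t x = x}) :
    ∃ r > (0:ℝ), ∀ x : X, (∀ t, φ t x = x) → ∀ y : X, dist x y < r → y = x := by
  obtain ⟨δ₁, hδ₁, hKE1⟩ := hKE 1 one_pos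
  by_contra hR
  push_neg at hR
  have hseq : ∀ n : ℕ, ∃ x y : X, (∀ t, φ t x = x) ∧ dist x y < 1/((n:ℝ)+1) ∧
      ¬ (∀ t, φ t y = y) := by
    intro n
    obtain ⟨x, hx, y, hxy, hne⟩ := hR (min δ₁ (1/((n:ℝ)+1))) (by positivity)
    refine ⟨x, y, hx, lt_of_lt_of_le hxy (min_le_right _ _), ?_⟩
    intro hyfix
    obtain ⟨τ, -, hyx⟩ := hKE1 x y (fun t => by
      rw [hx t, hyfix t]
      exact lt_of_lt_of_le hxy (min_le_left _ _))
    exact hne (by rw [hyx, hx τ])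
  choose xs ys hxfix hd hynfix using hseq
  obtain ⟨x, -, κ, hκ, hconv⟩ := isCompact_univ.tendsto_subseq (fun n => Set.mem_univ (xs n))
  have hyconv : Tendsto (fun j => ys (κ j)) atTop (𝓝 x) := by
    rw [tendsto_iff_dist_tendsto_zero]
    apply squeeze_zero (fun j => dist_nonneg)
      (g := fun j => 1/((κ j : ℝ)+1) + dist (xs (κ j)) x)
    · intro j
      calc dist (ys (κ j)) x ≤ dist (ys (κ j)) (xs (κ j)) + dist (xs (κ j)) x :=
            dist_triangle _ _ _
        _ ≤ 1/((κ j : ℝ)+1) + dist (xs (κ j)) x := by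
            have := hd (κ j)
            rw [dist_comm]
            linarith
    · have h1 : Tendsto (fun j => 1/((κ j : ℝ)+1)) atTop (𝓝 0) :=
        tendsto_one_div_add_atTop_nhds_zero_nat.comp hκ.tendsto_atTop
      have h2 : Tendsto (fun j => dist (xs (κ j)) x) atTop (𝓝 0) :=
        tendsto_iff_dist_tendsto_zero.mp hconv
      simpa using h1.add h2
  have hxFix : ∀ t, φ t x = x := by
    intro t
    have h1 : Tendsto (fun j => φ t (xs (κ j))) atTop (𝓝 (φ t x)) :=
      ((flow_cont φ hcont t).tendsto x).comp hconv
    have h2 : Tendsto (fun j => φ t (xs (κ j))) atTop (𝓝 x) := by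
      have : (fun j => φ t (xs (κ j))) = fun j => xs (κ j) := by
        funext j
        exact hxfix (κ j) t
      rw [this]
      exact hconv
    exact tendsto_nhds_unique h1 h2
  have hxY : ¬ ∀ t, φ t x = x := by
    have hYclosed : IsClosed {z : X | ¬ ∀ t, φ t z = z} := by
      have : {z : X | ¬ ∀ t, φ t z = z} = {z : X | ∀ t, φ t z = z}ᶜ := rfl
      rw [this]
      exact hFopen.isClosed_compl
    exact hYclosed.mem_of_tendsto hyconv (Eventually.of_forall (fun j => hynfix (κ j)))
  exact hxY hxFix

end Aux

theorem stmt10 {X : Type*} [MetricSpace X] [CompactSpace X]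
    (φ : ℝ → X → X)
    (hcont : Continuous fun p : ℝ × X => φ p.1 p.2)
    (h0 : ∀ x, φ 0 x = x)
    (hadd : ∀ t s x, φ (t + s) x = φ t (φ s x)) :
    (∀ ε > (0:ℝ), ∃ δ > (0:ℝ), ∀ (x y : X) (s : ℝ → ℝ),
        Continuous s → s 0 = 0 →
        (∀ t, max (dist (φ t x) (φ (s t) x)) (dist (φ t x) (φ (s t) y)) < δ) →
        ∃ τ : ℝ, |τ| < ε ∧ y = φ τ x) ↔
      ((∀ ε > (0:ℝ), ∃ δ > (0:ℝ), ∀ x y : X,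
          (∀ t, dist (φ t x) (φ t y) < δ) → ∃ τ : ℝ, |τ| < ε ∧ y = φ τ x) ∧
        IsOpen {x : X | ∀ t, φ t x = x}) := by
  constructor
  · intro hKH
    constructor
    · -- kinematic expansive, via s = id
      intro ε hε
      obtain ⟨δ, hδ, hKHδ⟩ := hKH ε hε
      refine ⟨δ, hδ, fun x y hxy => ?_⟩
      apply hKHδ x y id continuous_id rfl
      intro t
      simp only [id]
      rw [max_lt_iff]
      exact ⟨by rw [dist_self]; exact hδ, hxy t⟩
    · -- fix open, via s = 0
      rw [Metric.isOpen_iff]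
      intro x hx
      obtain ⟨δ, hδ, hKHδ⟩ := hKH 1 one_pos
      refine ⟨δ, hδ, fun y hy => ?_⟩
      have hx' : ∀ t, φ t x = x := hx
      obtain ⟨τ, -, hyx⟩ := hKHδ x y (fun _ => 0) continuous_const rfl (fun t => by
        rw [hx' t, h0 x, h0 y, max_lt_iff, dist_self]
        refine ⟨hδ, ?_⟩
        rw [dist_comm]
        exact hy)
      intro t
      rw [hyx, hx' τ, hx' t]
  · rintro ⟨hKE, hFopen⟩
    intro ε hε
    obtain ⟨δ₁, hδ₁, hKEδ⟩ := hKE ε hε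
    obtain ⟨r, hr, hiso⟩ := fix_isolated φ hcont hKE hFopen
    obtain ⟨δ₀, hδ₀, hsurj⟩ := lemma_P φ hcont h0 hadd hFopen
    refine ⟨min (min (δ₁/2) δ₀) r, by positivity, ?_⟩
    intro x y s hs hs0 hmax
    set δ : ℝ := min (min (δ₁/2) δ₀) r with hδ_def
    have hd1 : ∀ t, dist (φ t x) (φ (s t) x) < δ :=
      fun t => lt_of_le_of_lt (le_max_left _ _) (hmax t)
    have hd2 : ∀ t, dist (φ t x) (φ (s t) y) < δ :=
      fun t => lt_of_le_of_lt (le_max_right _ _) (hmax t)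
    by_cases hxfix : ∀ t, φ t x = x
    · -- x fixed : y = x
      have h2 := hd2 0
      rw [hxfix 0, hs0, h0 y] at h2
      have hyx : y = x := hiso x hxfix y (lt_of_lt_of_le h2 (min_le_right _ _))
      exact ⟨0, by simpa using hε, by rw [h0, hyx]⟩
    · -- x not fixed : s surjective, apply kinematic expansivity
      have hsurjs : ∀ u, ∃ t, s t = u := by
        apply hsurj x hxfix s hs hs0
        intro t
        exact lt_of_lt_of_le (hd1 t) (le_trans (min_le_left _ _) (min_le_right _ _))
      apply hKEδ x y
      intro u
      obtain ⟨t, ht⟩ := hsurjs u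
      have h1 := hd1 t
      have h2 := hd2 t
      have hδle : δ ≤ δ₁/2 := le_trans (min_le_left _ _) (min_le_left _ _)
      calc dist (φ u x) (φ u y) = dist (φ (s t) x) (φ (s t) y) := by rw [ht]
        _ ≤ dist (φ (s t) x) (φ t x) + dist (φ t x) (φ (s t) y) := dist_triangle _ _ _
        _ < δ + δ := by
            rw [dist_comm (φ (s t) x) (φ t x)]
            exact add_lt_add h1 h2
        _ ≤ δ₁ := by linarith
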